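/- Fix q with 1 < q < 2, a relaxation interval ε = [ε₋, ε₊] with 0 < ε₋ ≤ ε₊ < ∞, let Ω ⊂ ℝ^d be a measurable set of finite Lebesgue measure |Ω|, and let r ≥ 2 (so in particular r ≥ q). Suppose σ ∈ L^r(Ω; ℝ^d) and σ_ε : Ω → ℝ^d is measurable with J*_ε(σ_ε) ≤ J*_ε(σ) (the minimizing property of σ_ε over the constraint set). Then J*(σ_ε) - J*(σ) ≤ J*_ε(σ_ε) - J*(σ) ≤ (|Ω|/q) ε₋^q + (1/q) ε₊^{-(r-q)} ‖σ‖_{L^r(Ω)}^r. -/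

import Mathlib

open Real MeasureTheory

/-- The relaxed integrand `κ*_ε`. -/
noncomputable def kappaStar (q em ep t : ℝ) : ℝ :=
  if t ≤ em then (1/2) * em ^ (q-2) * t^2 + (1/q - 1/2) * em ^ q
  else if t ≤ ep then (1/q) * t ^ q
  else (1/2) * ep ^ (q-2) * t^2 + (1/q - 1/2) * ep ^ q

/-- The relaxed dual energy `J*_ε(τ) = ∫_Ω κ*_ε(|τ|) dx`. -/
noncomputable def Jeps (q em ep : ℝ) {d : ℕ} (Ω : Set (EuclideanSpace ℝ (Fin d)))
    (τ : EuclideanSpace ℝ (Fin d) → EuclideanSpace ℝ (Fin d)) : ℝ :=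
  ∫ x in Ω, kappaStar q em ep ‖τ x‖

/-- The dual energy `J*(τ) = (1/q) ∫_Ω |τ|^q dx`. -/
noncomputable def Jstar (q : ℝ) {d : ℕ} (Ω : Set (EuclideanSpace ℝ (Fin d)))
    (τ : EuclideanSpace ℝ (Fin d) → EuclideanSpace ℝ (Fin d)) : ℝ :=
  (1/q) * ∫ x in Ω, ‖τ x‖ ^ q

/-- AM-GM step: `(1/q) t^q ≤ (1/2) s^(q-2) t² + (1/q - 1/2) s^q` for `s > 0`, `t ≥ 0`. -/
lemma amgm_aux (q : ℝ) (hq1 : 1 < q) (hq2 : q < 2) {s t : ℝ} (hs : 0 < s) (ht : 0 ≤ t) :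
    (1/q) * t ^ q ≤ (1/2) * s ^ (q-2) * t^2 + (1/q - 1/2) * s ^ q := by
  have hq0 : 0 < q := by linarith
  have e1 : (s ^ (q-2) * t^2) ^ (q/2) * (s ^ q) ^ (1 - q/2) = t ^ q := by
    rw [Real.mul_rpow (Real.rpow_nonneg hs.le _) (sq_nonneg t),
        ← Real.rpow_natCast t 2, ← Real.rpow_mul ht,
        ← Real.rpow_mul hs.le, ← Real.rpow_mul hs.le,
        mul_right_comm, ← Real.rpow_add hs]
    push_cast
    rw [show (q-2) * (q/2) + q * (1 - q/2) = 0 by ring, Real.rpow_zero, one_mul,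
      show (2:ℝ) * (q/2) = q by ring]
  have key := Real.geom_mean_le_arith_mean2_weighted (w₁ := q/2) (w₂ := 1 - q/2)
    (p₁ := s ^ (q-2) * t^2) (p₂ := s ^ q) (by linarith) (by linarith)
    (mul_nonneg (Real.rpow_nonneg hs.le _) (sq_nonneg t)) (Real.rpow_nonneg hs.le _)
    (by ring)
  rw [e1] at key
  have h2 := mul_le_mul_of_nonneg_left key (le_of_lt (one_div_pos.mpr hq0))
  have h3 : (1/q) * (q/2 * (s ^ (q-2) * t^2) + (1 - q/2) * s ^ q)
      = (1/2) * s ^ (q-2) * t^2 + (1/q - 1/2) * s ^ q := by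
    field_simp
  linarith [h2, h3.le, h3.ge]

/-- Lower bound: `(1/q) t^q ≤ κ*_ε(t)`. -/
lemma kappa_lower (q em ep : ℝ) (hq1 : 1 < q) (hq2 : q < 2) (hem : 0 < em) (hemep : em ≤ ep)
    {t : ℝ} (ht : 0 ≤ t) : (1/q) * t ^ q ≤ kappaStar q em ep t := by
  have hep : 0 < ep := lt_of_lt_of_le hem hemep
  unfold kappaStar
  split_ifs with h1 h2
  · exact amgm_aux q hq1 hq2 hem ht
  · exact le_rfl
  · exact amgm_aux q hq1 hq2 hep ht

/-- helper: `s^(q-2) * t^2 ≤ s^q` for `0 ≤ t ≤ s`. -/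
lemma quad_le (q : ℝ) {s t : ℝ} (hs : 0 < s) (ht : 0 ≤ t) (hts : t ≤ s) :
    s ^ (q-2) * t^2 ≤ s ^ q := by
  have h1 : s ^ (q-2) * t^2 ≤ s ^ (q-2) * s^2 :=
    mul_le_mul_of_nonneg_left (by nlinarith) (Real.rpow_nonneg hs.le _)
  have h2 : s ^ (q-2) * s^2 = s ^ q := by
    rw [← Real.rpow_natCast s 2, ← Real.rpow_add hs]
    norm_num
  linarith

/-- Upper bound: `κ*_ε(t) ≤ (1/q) em^q + (1/q) ep^(q-r) t^r + (1/q) t^q`. -/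
lemma kappa_upper (q em ep r : ℝ) (hq1 : 1 < q) (hq2 : q < 2) (hem : 0 < em) (hemep : em ≤ ep)
    (hr : 2 ≤ r) {t : ℝ} (ht : 0 ≤ t) :
    kappaStar q em ep t ≤ (1/q) * em ^ q + (1/q) * (ep ^ (q - r) * t ^ r) + (1/q) * t ^ q := by
  have hq0 : 0 < q := by linarith
  have hep : 0 < ep := lt_of_lt_of_le hem hemep
  have hqi : (1:ℝ)/2 < 1/q := by
    rw [div_lt_div_iff₀ (by norm_num) hq0]; linarith
  have htq : 0 ≤ t ^ q := Real.rpow_nonneg ht _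
  have htr : 0 ≤ t ^ r := Real.rpow_nonneg ht _
  have hemq : 0 ≤ em ^ q := Real.rpow_nonneg hem.le _
  have hepr : 0 ≤ ep ^ (q - r) := Real.rpow_nonneg hep.le _
  unfold kappaStar
  split_ifs with h1 h2
  · have := quad_le q hem ht h1
    nlinarith [mul_nonneg hepr htr]
  · nlinarith [mul_nonneg hepr htr]
  · push_neg at h1 h2
    have htpos : 0 < t := lt_trans hep h2
    have f1 : ep ^ (q-2) * t^2 ≤ ep ^ (q-r) * t ^ r := by
      have a1 : ep ^ (q-2) = ep ^ (q-r) * ep ^ (r-2) := by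
        rw [← Real.rpow_add hep]; ring_nf
      have a2 : ep ^ (r-2) ≤ t ^ (r-2) := Real.rpow_le_rpow hep.le h2.le (by linarith)
      have a3 : t ^ (r-2) * t^2 = t ^ r := by
        rw [← Real.rpow_natCast t 2, ← Real.rpow_add htpos]; norm_num
      calc ep ^ (q-2) * t^2 = ep ^ (q-r) * (ep ^ (r-2) * t^2) := by rw [a1]; ring
        _ ≤ ep ^ (q-r) * (t ^ (r-2) * t^2) := by
            apply mul_le_mul_of_nonneg_left _ hepr
            exact mul_le_mul_of_nonneg_right a2 (sq_nonneg t)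
        _ = ep ^ (q-r) * t ^ r := by rw [a3]
    have f2 : ep ^ q ≤ ep ^ (q-r) * t ^ r := by
      have a1 : ep ^ q = ep ^ (q-r) * ep ^ r := by rw [← Real.rpow_add hep]; ring_nf
      rw [a1]
      exact mul_le_mul_of_nonneg_left (Real.rpow_le_rpow hep.le h2.le (by linarith)) hepr
    calc (1:ℝ)/2 * ep ^ (q-2) * t^2 + (1/q - 1/2) * ep ^ q
        ≤ 1/2 * (ep ^ (q-r) * t ^ r) + (1/q - 1/2) * (ep ^ (q-r) * t ^ r) := by
          have g1 : (1:ℝ)/2 * (ep ^ (q-2) * t^2) ≤ 1/2 * (ep ^ (q-r) * t ^ r) :=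
            mul_le_mul_of_nonneg_left f1 (by norm_num)
          have g2 : (1/q - 1/2) * ep ^ q ≤ (1/q - 1/2) * (ep ^ (q-r) * t ^ r) :=
            mul_le_mul_of_nonneg_left f2 (by linarith)
          nlinarith [g1, g2]
      _ = (1/q) * (ep ^ (q-r) * t ^ r) := by ring
      _ ≤ (1/q) * em ^ q + (1/q) * (ep ^ (q-r) * t ^ r) + (1/q) * t ^ q := by
          nlinarith [mul_nonneg (le_of_lt (one_div_pos.mpr hq0)) hemq,
            mul_nonneg (le_of_lt (one_div_pos.mpr hq0)) htq]

lemma kappa_meas (q em ep : ℝ) : Measurable (kappaStar q em ep) := by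
  unfold kappaStar
  apply Measurable.ite (measurableSet_le measurable_id measurable_const)
  · exact ((measurable_const.mul (measurable_id.pow_const 2)).add measurable_const)
  apply Measurable.ite (measurableSet_le measurable_id measurable_const)
  · exact measurable_const.mul (by fun_prop)
  · exact ((measurable_const.mul (measurable_id.pow_const 2)).add measurable_const)

/-- `t^a ≤ 1 + t^b` for `0 ≤ t`, `0 < a ≤ b`. -/
lemma rpow_le_one_add (a b t : ℝ) (ht : 0 ≤ t) (ha : 0 < a) (hab : a ≤ b) :
    t ^ a ≤ 1 + t ^ b := by
  rcases le_or_gt t 1 with h | h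
  · have := Real.rpow_le_one ht h ha.le
    have := Real.rpow_nonneg ht b
    linarith
  · have := Real.rpow_le_rpow_of_exponent_le h.le hab
    linarith

theorem stmt7 (q em ep r : ℝ) (hq1 : 1 < q) (hq2 : q < 2) (hem : 0 < em) (hemep : em ≤ ep)
    (hr : 2 ≤ r)
    {d : ℕ} (Ω : Set (EuclideanSpace ℝ (Fin d))) (hΩ : MeasurableSet Ω)
    (hΩfin : volume Ω < ⊤)
    (σ σe : EuclideanSpace ℝ (Fin d) → EuclideanSpace ℝ (Fin d))
    (hσ : Measurable σ) (hσe : Measurable σe)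
    (hσr : IntegrableOn (fun x => ‖σ x‖ ^ r) Ω volume)
    (hσe2 : IntegrableOn (fun x => ‖σe x‖ ^ 2) Ω volume)
    (hmin : Jeps q em ep Ω σe ≤ Jeps q em ep Ω σ) :
    Jstar q Ω σe - Jstar q Ω σ ≤ Jeps q em ep Ω σe - Jstar q Ω σ ∧
    Jeps q em ep Ω σe - Jstar q Ω σ ≤
      (volume Ω).toReal / q * em ^ q
        + (1/q) * ep ^ (-(r - q)) * ∫ x in Ω, ‖σ x‖ ^ r := by
  have hq0 : 0 < q := by linarith
  have hep : 0 < ep := lt_of_lt_of_le hem hemep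
  have hqinv : (0:ℝ) ≤ 1/q := by positivity
  have hconst : ∀ c : ℝ, IntegrableOn (fun _ : EuclideanSpace ℝ (Fin d) => c) Ω volume :=
    fun c => integrableOn_const hΩfin.ne
  have hκ0 : ∀ t : ℝ, 0 ≤ t → 0 ≤ kappaStar q em ep t := fun t ht =>
    le_trans (by positivity) (kappa_lower q em ep hq1 hq2 hem hemep ht)
  -- measurability
  have mκσ : AEStronglyMeasurable (fun x => kappaStar q em ep ‖σ x‖) (volume.restrict Ω) :=
    ((kappa_meas q em ep).comp hσ.norm).aestronglyMeasurable
  have mκσe : AEStronglyMeasurable (fun x => kappaStar q em ep ‖σe x‖) (volume.restrict Ω) :=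
    ((kappa_meas q em ep).comp hσe.norm).aestronglyMeasurable
  have mσq : AEStronglyMeasurable (fun x => ‖σ x‖ ^ q) (volume.restrict Ω) :=
    (((by fun_prop : Measurable fun t : ℝ => t ^ q)).comp hσ.norm).aestronglyMeasurable
  have mσeq : AEStronglyMeasurable (fun x => ‖σe x‖ ^ q) (volume.restrict Ω) :=
    (((by fun_prop : Measurable fun t : ℝ => t ^ q)).comp hσe.norm).aestronglyMeasurable
  -- integrability
  have intσq : IntegrableOn (fun x => ‖σ x‖ ^ q) Ω volume := by
    apply ((hconst 1).add hσr).mono' mσq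
    filter_upwards with x
    rw [Real.norm_of_nonneg (Real.rpow_nonneg (norm_nonneg _) _)]
    exact rpow_le_one_add q r _ (norm_nonneg _) hq0 (by linarith)
  have intσeq : IntegrableOn (fun x => ‖σe x‖ ^ q) Ω volume := by
    apply ((hconst 1).add hσe2).mono' mσeq
    filter_upwards with x
    rw [Real.norm_of_nonneg (Real.rpow_nonneg (norm_nonneg _) _)]
    have h2 : ‖σe x‖ ^ (2:ℝ) = ‖σe x‖ ^ (2:ℕ) := by
      rw [← Real.rpow_natCast _ 2]; norm_num
    have := rpow_le_one_add q 2 ‖σe x‖ (norm_nonneg _) hq0 (by linarith)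
    rw [h2] at this
    exact this
  -- quadratic upper bound for kappa
  have hquad : ∀ t : ℝ, 0 ≤ t →
      kappaStar q em ep t ≤ ((1/q)*em^q + (1/q)*ep^q) + (em^(q-2) + ep^(q-2)) * t^2 := by
    intro t ht
    have h0 : (0:ℝ) ≤ em ^ (q-2) := Real.rpow_nonneg hem.le _
    have h0' : (0:ℝ) ≤ ep ^ (q-2) := Real.rpow_nonneg hep.le _
    have hemq : (0:ℝ) ≤ em ^ q := Real.rpow_nonneg hem.le _
    have hepq : (0:ℝ) ≤ ep ^ q := Real.rpow_nonneg hep.le _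
    have ht2 : (0:ℝ) ≤ t^2 := sq_nonneg t
    unfold kappaStar
    split_ifs with h1 h2
    · have := quad_le q hem ht h1
      nlinarith [mul_nonneg h0' ht2, mul_nonneg h0 ht2, mul_nonneg hqinv hemq,
        mul_nonneg hqinv hepq]
    · have hle : t ^ q ≤ ep ^ q := Real.rpow_le_rpow ht h2 hq0.le
      have := mul_le_mul_of_nonneg_left hle hqinv
      nlinarith [mul_nonneg h0' ht2, mul_nonneg h0 ht2, mul_nonneg hqinv hemq]
    · nlinarith [mul_nonneg h0' ht2, mul_nonneg h0 ht2, mul_nonneg hqinv hemq,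
        mul_nonneg hqinv hepq]
  have intκσe : IntegrableOn (fun x => kappaStar q em ep ‖σe x‖) Ω volume := by
    apply ((hconst ((1/q)*em^q + (1/q)*ep^q)).add
      (hσe2.const_mul (em^(q-2) + ep^(q-2)))).mono' mκσe
    filter_upwards with x
    rw [Real.norm_of_nonneg (hκ0 _ (norm_nonneg _))]
    exact hquad _ (norm_nonneg _)
  have intκσ : IntegrableOn (fun x => kappaStar q em ep ‖σ x‖) Ω volume := by
    apply ((hconst ((1/q)*em^q + 1/q)).add
      (hσr.const_mul ((1/q)*ep^(q-r) + 1/q))).mono' mκσ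
    filter_upwards with x
    rw [Real.norm_of_nonneg (hκ0 _ (norm_nonneg _))]
    have h1 := kappa_upper q em ep r hq1 hq2 hem hemep hr (norm_nonneg (σ x))
    have h2 := mul_le_mul_of_nonneg_left
      (rpow_le_one_add q r ‖σ x‖ (norm_nonneg _) hq0 (by linarith)) hqinv
    simp only [Pi.add_apply]
    nlinarith [h1, h2]
  -- first conjunct
  have first : Jstar q Ω σe ≤ Jeps q em ep Ω σe := by
    simp only [Jstar, Jeps]
    rw [← integral_const_mul]
    exact setIntegral_mono_on (intσeq.const_mul _) intκσe hΩ
      (fun x _ => kappa_lower q em ep hq1 hq2 hem hemep (norm_nonneg _))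
  refine ⟨by linarith, ?_⟩
  -- second conjunct
  rw [neg_sub]
  have e1 : ∫ x in Ω, (kappaStar q em ep ‖σ x‖ - (1/q) * ‖σ x‖ ^ q)
      = Jeps q em ep Ω σ - Jstar q Ω σ := by
    rw [integral_sub intκσ (intσq.const_mul (1/q)), integral_const_mul]
    rfl
  have e2 : ∫ x in Ω, ((1/q) * em ^ q + ((1/q) * ep ^ (q-r)) * ‖σ x‖ ^ r)
      = (volume Ω).toReal * ((1/q) * em ^ q)
        + ((1/q) * ep ^ (q-r)) * ∫ x in Ω, ‖σ x‖ ^ r := by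
    rw [integral_add (hconst _) (hσr.const_mul _), setIntegral_const, smul_eq_mul,
      integral_const_mul, Measure.real]
  have mono : ∫ x in Ω, (kappaStar q em ep ‖σ x‖ - (1/q) * ‖σ x‖ ^ q)
      ≤ ∫ x in Ω, ((1/q) * em ^ q + ((1/q) * ep ^ (q-r)) * ‖σ x‖ ^ r) := by
    apply setIntegral_mono_on (intκσ.sub (intσq.const_mul (1/q)))
      ((hconst _).add (hσr.const_mul _)) hΩ
    intro x _
    have h1 := kappa_upper q em ep r hq1 hq2 hem hemep hr (norm_nonneg (σ x))
    simp only [Pi.sub_apply, Pi.add_apply]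
    nlinarith [h1]
  have efin : (volume Ω).toReal * ((1/q) * em ^ q) = (volume Ω).toReal / q * em ^ q := by
    ring
  linarith [hmin, e1.ge, e1.le, e2.le, e2.ge, mono]
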